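/- The map Δ ↦ θ̂(Δ) is differentiable at Δ = 0 with derivative C(x) = 4(φ(x)² + x·φ(x)·(2Φ(x)−1) − x²·Φ(x)·(1−Φ(x))), where x = (μ2−μ1)/2; that is, θ̂(Δ) = θ* + C(x)·Δ + o(Δ) as Δ → 0. -/

import Mathlib

open MeasureTheory Filter Set Real


/-- The standard normal density `φ`. -/
noncomputable def stdGauss (t : ℝ) : ℝ :=
  (Real.sqrt (2 * Real.pi))⁻¹ * Real.exp (-t ^ 2 / 2)

/-- The standard normal CDF `Φ`. -/
noncomputable def stdCDF (t : ℝ) : ℝ := ∫ s in Set.Iic t, stdGauss s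

/-- The (pseudo-)prior of the head class: `p1(Δ) = e^{2xΔ}/(1+e^{2xΔ})`, `x = (μ2−μ1)/2`. -/
noncomputable def pHead (x Δ : ℝ) : ℝ := Real.exp (2 * x * Δ) / (1 + Real.exp (2 * x * Δ))

/-- The (pseudo-)prior of the tail class: `p2(Δ) = 1/(1+e^{2xΔ})`, `x = (μ2−μ1)/2`. -/
noncomputable def pTail (x Δ : ℝ) : ℝ := 1 / (1 + Real.exp (2 * x * Δ))

/-- The mixture density `f_Δ(t) = p1(Δ)·φ(t−μ1) + p2(Δ)·φ(t−μ2)`. -/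
noncomputable def mixDensity (μ1 μ2 Δ t : ℝ) : ℝ :=
  pHead ((μ2 - μ1) / 2) Δ * stdGauss (t - μ1) + pTail ((μ2 - μ1) / 2) Δ * stdGauss (t - μ2)

/-- The conditional mean `m1(Δ)` of `f_Δ` to the left of the boundary `θ* + Δ`. -/
noncomputable def mLeft (μ1 μ2 Δ : ℝ) : ℝ :=
  (∫ t in Set.Iic ((μ1 + μ2) / 2 + Δ), t * mixDensity μ1 μ2 Δ t) /
    ∫ t in Set.Iic ((μ1 + μ2) / 2 + Δ), mixDensity μ1 μ2 Δ t

/-- The conditional mean `m2(Δ)` of `f_Δ` to the right of the boundary `θ* + Δ`. -/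
noncomputable def mRight (μ1 μ2 Δ : ℝ) : ℝ :=
  (∫ t in Set.Ioi ((μ1 + μ2) / 2 + Δ), t * mixDensity μ1 μ2 Δ t) /
    ∫ t in Set.Ioi ((μ1 + μ2) / 2 + Δ), mixDensity μ1 μ2 Δ t

/-- The progressively-balanced-sampling update `θ̂(Δ) = (m1(Δ) + m2(Δ))/2`. -/
noncomputable def pbsUpdate (μ1 μ2 Δ : ℝ) : ℝ := (mLeft μ1 μ2 Δ + mRight μ1 μ2 Δ) / 2

/-- The contraction factor `C(x)`. -/
noncomputable def contractionC (x : ℝ) : ℝ :=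
  4 * (stdGauss x ^ 2 + x * stdGauss x * (2 * stdCDF x - 1) -
    x ^ 2 * stdCDF x * (1 - stdCDF x))

lemma stdGauss_eq (t : ℝ) : stdGauss t = (Real.sqrt (2 * Real.pi))⁻¹ * Real.exp (-(2⁻¹) * t ^ 2) := by
  rw [stdGauss]; ring_nf
lemma stdGauss_neg (t : ℝ) : stdGauss (-t) = stdGauss t := by
  simp [stdGauss, neg_pow]
lemma continuous_stdGauss : Continuous stdGauss := by
  unfold stdGauss; fun_prop
lemma integrable_stdGauss : Integrable stdGauss := by
  have := (integrable_exp_neg_mul_sq (by norm_num : (0:ℝ) < 2⁻¹)).const_mul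
    (Real.sqrt (2 * Real.pi))⁻¹
  exact this.congr (by filter_upwards with t using (stdGauss_eq t).symm)
lemma integrable_mul_stdGauss : Integrable (fun t => t * stdGauss t) := by
  have := (integrable_mul_exp_neg_mul_sq (by norm_num : (0:ℝ) < 2⁻¹)).const_mul
    (Real.sqrt (2 * Real.pi))⁻¹
  exact this.congr (by filter_upwards with t; rw [stdGauss_eq]; ring)
lemma hasDerivAt_stdGauss (t : ℝ) : HasDerivAt stdGauss (-t * stdGauss t) t := by
  have h1 : HasDerivAt (fun s : ℝ => -s ^ 2 / 2) (-t) t := by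
    have := ((hasDerivAt_pow 2 t).neg).div_const 2
    exact this.congr_deriv (by norm_num; ring)
  have h2 := h1.exp
  have h3 := h2.const_mul (Real.sqrt (2 * Real.pi))⁻¹
  have h4 : -t * stdGauss t = (Real.sqrt (2*Real.pi))⁻¹ * (Real.exp (-t^2/2) * -t) := by
    rw [stdGauss]; ring
  rw [h4, show stdGauss = (fun s => (Real.sqrt (2*Real.pi))⁻¹ * Real.exp (-s^2/2)) from rfl]
  exact h3
lemma integral_stdGauss : ∫ t, stdGauss t = 1 := by
  have h : ∫ t : ℝ, Real.exp (-(2⁻¹) * t ^ 2) = Real.sqrt (π / 2⁻¹) := integral_gaussian 2⁻¹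
  have h2 : (π / 2⁻¹) = 2 * π := by ring
  rw [show (fun t => stdGauss t) = fun t => (Real.sqrt (2 * Real.pi))⁻¹ * Real.exp (-(2⁻¹) * t ^ 2) from funext stdGauss_eq]
  rw [integral_const_mul, h, h2,
    inv_mul_cancel₀ (by positivity : Real.sqrt (2 * π) ≠ 0)]
lemma hasDerivAt_stdCDF (a : ℝ) : HasDerivAt stdCDF (stdGauss a) a := by
  have key : ∀ t : ℝ, stdCDF t = stdCDF 0 + ∫ x in (0:ℝ)..t, stdGauss x := by
    intro t
    rw [← intervalIntegral.integral_Iic_sub_Iic integrable_stdGauss.integrableOn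
      integrable_stdGauss.integrableOn]
    show stdCDF t = stdCDF 0 + (stdCDF t - stdCDF 0)
    ring
  have h : HasDerivAt (fun t => stdCDF 0 + ∫ x in (0:ℝ)..t, stdGauss x) (stdGauss a) a := by
    exact (intervalIntegral.integral_hasDerivAt_right
      (continuous_stdGauss.intervalIntegrable _ _)
      (continuous_stdGauss.stronglyMeasurableAtFilter _ _)
      continuous_stdGauss.continuousAt).const_add (stdCDF 0)
  exact h.congr_of_eventuallyEq (Eventually.of_forall fun t => (key t))
lemma tendsto_sq_atBot : Tendsto (fun t : ℝ => -t ^ 2 / 2) atTop atBot := by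
  apply Tendsto.atBot_div_const (by norm_num : (0:ℝ) < 2)
  exact tendsto_neg_atTop_atBot.comp (tendsto_pow_atTop (by norm_num))
lemma tendsto_stdGauss_atTop : Tendsto stdGauss atTop (nhds 0) := by
  have h2 : Tendsto stdGauss atTop (nhds ((Real.sqrt (2 * Real.pi))⁻¹ * 0)) := by
    apply Tendsto.const_mul
    exact Real.tendsto_exp_atBot.comp tendsto_sq_atBot
  simpa using h2
lemma tendsto_stdGauss_atBot : Tendsto stdGauss atBot (nhds 0) := by
  have := tendsto_stdGauss_atTop.comp tendsto_neg_atBot_atTop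
  refine this.congr fun t => ?_
  simp [stdGauss_neg]
lemma stdGauss_nonneg (t : ℝ) : 0 ≤ stdGauss t := by
  unfold stdGauss; positivity
lemma stdCDF_tendsto_atBot : Tendsto stdCDF atBot (nhds 0) := by
  have : ∀ t : ℝ, stdCDF t = ∫ s, (Set.Iic t).indicator stdGauss s := by
    intro t
    rw [stdCDF, MeasureTheory.integral_indicator measurableSet_Iic]
  rw [show stdCDF = fun t => ∫ s, (Set.Iic t).indicator stdGauss s from funext this]
  have h0 : ∫ s : ℝ, (0:ℝ) = 0 := by simp
  rw [← h0]
  apply tendsto_integral_filter_of_dominated_convergence stdGauss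
  · filter_upwards with t
    exact (integrable_stdGauss.aestronglyMeasurable).indicator measurableSet_Iic
  · filter_upwards with t
    filter_upwards with s
    rw [Real.norm_eq_abs, abs_of_nonneg (Set.indicator_nonneg (fun x _ => stdGauss_nonneg x) s)]
    exact Set.indicator_le_self' (fun x _ => stdGauss_nonneg x) s
  · exact integrable_stdGauss
  · filter_upwards with s
    have : ∀ᶠ t : ℝ in atBot, (Set.Iic t).indicator stdGauss s = 0 := by
      filter_upwards [eventually_lt_atBot s] with t ht
      exact Set.indicator_of_notMem (by simpa using ht) _
    exact Tendsto.congr' (this.mono fun t h => h.symm) tendsto_const_nhds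
lemma stdCDF_tendsto_atTop : Tendsto stdCDF atTop (nhds 1) := by
  have : ∀ t : ℝ, stdCDF t = ∫ s, (Set.Iic t).indicator stdGauss s := by
    intro t
    rw [stdCDF, MeasureTheory.integral_indicator measurableSet_Iic]
  rw [show stdCDF = fun t => ∫ s, (Set.Iic t).indicator stdGauss s from funext this,
    ← integral_stdGauss]
  apply tendsto_integral_filter_of_dominated_convergence stdGauss
  · filter_upwards with t
    exact (integrable_stdGauss.aestronglyMeasurable).indicator measurableSet_Iic
  · filter_upwards with t
    filter_upwards with s
    rw [Real.norm_eq_abs, abs_of_nonneg (Set.indicator_nonneg (fun x _ => stdGauss_nonneg x) s)]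
    exact Set.indicator_le_self' (fun x _ => stdGauss_nonneg x) s
  · exact integrable_stdGauss
  · filter_upwards with s
    have : ∀ᶠ t : ℝ in atTop, (Set.Iic t).indicator stdGauss s = stdGauss s := by
      filter_upwards [eventually_ge_atTop s] with t ht
      exact Set.indicator_of_mem (by simpa using ht) _
    exact Tendsto.congr' (this.mono fun t h => h.symm) tendsto_const_nhds
lemma integrable_stdGauss_shift (μ : ℝ) : Integrable (fun t => stdGauss (t - μ)) :=
  integrable_stdGauss.comp_sub_right μ
lemma integrable_mul_stdGauss_shift (μ : ℝ) : Integrable (fun t => t * stdGauss (t - μ)) := by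
  have h1 : Integrable (fun t => (t - μ) * stdGauss (t - μ)) :=
    integrable_mul_stdGauss.comp_sub_right μ
  have h2 := (integrable_stdGauss_shift μ).const_mul μ
  exact (h1.add h2).congr (by filter_upwards with t; simp; ring)
lemma hasDerivAt_cdf_shift (μ t : ℝ) :
    HasDerivAt (fun s => stdCDF (s - μ)) (stdGauss (t - μ)) t := by
  simpa [Function.comp_def] using (hasDerivAt_stdCDF (t - μ)).comp t ((hasDerivAt_id t).sub_const μ)
lemma tendsto_cdf_shift_atBot (μ : ℝ) :
    Tendsto (fun s => stdCDF (s - μ)) atBot (nhds 0) :=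
  stdCDF_tendsto_atBot.comp (tendsto_atBot_add_const_right _ (-μ) tendsto_id)
lemma tendsto_cdf_shift_atTop (μ : ℝ) :
    Tendsto (fun s => stdCDF (s - μ)) atTop (nhds 1) :=
  stdCDF_tendsto_atTop.comp (tendsto_atTop_add_const_right _ (-μ) tendsto_id)
lemma integral_Iic_stdGauss_shift (μ c : ℝ) :
    ∫ t in Set.Iic c, stdGauss (t - μ) = stdCDF (c - μ) := by
  have := MeasureTheory.integral_Iic_of_hasDerivAt_of_tendsto'
    (f := fun s => stdCDF (s - μ)) (f' := fun t => stdGauss (t - μ)) (a := c)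
    (fun t _ => hasDerivAt_cdf_shift μ t)
    (integrable_stdGauss_shift μ).integrableOn (tendsto_cdf_shift_atBot μ)
  simpa using this
lemma integral_stdGauss_shift (μ : ℝ) : ∫ t, stdGauss (t - μ) = 1 := by
  have := MeasureTheory.integral_of_hasDerivAt_of_tendsto
    (f := fun s => stdCDF (s - μ)) (f' := fun t => stdGauss (t - μ))
    (fun t => hasDerivAt_cdf_shift μ t) (integrable_stdGauss_shift μ)
    (tendsto_cdf_shift_atBot μ) (tendsto_cdf_shift_atTop μ)
  simpa using this
lemma hasDerivAt_moment_anti (μ t : ℝ) :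
    HasDerivAt (fun s => μ * stdCDF (s - μ) - stdGauss (s - μ))
      (t * stdGauss (t - μ)) t := by
  have h1 := (hasDerivAt_cdf_shift μ t).const_mul μ
  have h2 : HasDerivAt (fun s => stdGauss (s - μ)) (-(t - μ) * stdGauss (t - μ)) t := by
    simpa [Function.comp_def] using (hasDerivAt_stdGauss (t - μ)).comp t ((hasDerivAt_id t).sub_const μ)
  have := h1.sub h2
  exact this.congr_deriv (by ring)
lemma tendsto_moment_anti_atBot (μ : ℝ) :
    Tendsto (fun s => μ * stdCDF (s - μ) - stdGauss (s - μ)) atBot (nhds 0) := by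
  have := ((tendsto_cdf_shift_atBot μ).const_mul μ).sub
    (tendsto_stdGauss_atBot.comp (tendsto_atBot_add_const_right _ (-μ) tendsto_id))
  simpa [← sub_eq_add_neg] using this
lemma tendsto_moment_anti_atTop (μ : ℝ) :
    Tendsto (fun s => μ * stdCDF (s - μ) - stdGauss (s - μ)) atTop (nhds μ) := by
  have := ((tendsto_cdf_shift_atTop μ).const_mul μ).sub
    (tendsto_stdGauss_atTop.comp (tendsto_atTop_add_const_right _ (-μ) tendsto_id))
  simpa [← sub_eq_add_neg] using this
lemma integral_Iic_mul_stdGauss_shift (μ c : ℝ) :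
    ∫ t in Set.Iic c, t * stdGauss (t - μ) = μ * stdCDF (c - μ) - stdGauss (c - μ) := by
  have := MeasureTheory.integral_Iic_of_hasDerivAt_of_tendsto'
    (f := fun s => μ * stdCDF (s - μ) - stdGauss (s - μ))
    (f' := fun t => t * stdGauss (t - μ)) (a := c)
    (fun t _ => hasDerivAt_moment_anti μ t)
    (integrable_mul_stdGauss_shift μ).integrableOn (tendsto_moment_anti_atBot μ)
  simpa using this
lemma integral_mul_stdGauss_shift (μ : ℝ) : ∫ t, t * stdGauss (t - μ) = μ := by
  have := MeasureTheory.integral_of_hasDerivAt_of_tendsto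
    (f := fun s => μ * stdCDF (s - μ) - stdGauss (s - μ))
    (f' := fun t => t * stdGauss (t - μ))
    (fun t => hasDerivAt_moment_anti μ t) (integrable_mul_stdGauss_shift μ)
    (tendsto_moment_anti_atBot μ) (tendsto_moment_anti_atTop μ)
  simpa using this
lemma integral_Ioi_stdGauss_shift (μ c : ℝ) :
    ∫ t in Set.Ioi c, stdGauss (t - μ) = 1 - stdCDF (c - μ) := by
  have h := intervalIntegral.integral_Iic_add_Ioi (b := c)
    (integrable_stdGauss_shift μ).integrableOn (integrable_stdGauss_shift μ).integrableOn
  rw [integral_Iic_stdGauss_shift, integral_stdGauss_shift] at h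
  linarith
lemma integral_Ioi_mul_stdGauss_shift (μ c : ℝ) :
    ∫ t in Set.Ioi c, t * stdGauss (t - μ)
      = μ * (1 - stdCDF (c - μ)) + stdGauss (c - μ) := by
  have h := intervalIntegral.integral_Iic_add_Ioi (b := c)
    (integrable_mul_stdGauss_shift μ).integrableOn
    (integrable_mul_stdGauss_shift μ).integrableOn
  rw [integral_Iic_mul_stdGauss_shift, integral_mul_stdGauss_shift] at h
  linarith
lemma stdCDF_neg (t : ℝ) : stdCDF (-t) = 1 - stdCDF t := by
  have h1 := MeasureTheory.integral_Iic_of_hasDerivAt_of_tendsto'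
    (f := fun s => stdCDF (-s)) (f' := fun s => -stdGauss s) (a := t)
    (fun s _ => by
      have := (hasDerivAt_stdCDF (-s)).comp s (hasDerivAt_neg s)
      simpa [stdGauss_neg, Function.comp_def] using this)
    (integrable_stdGauss.neg.integrableOn)
    (stdCDF_tendsto_atTop.comp tendsto_neg_atBot_atTop)
  have h2 := MeasureTheory.integral_Iic_of_hasDerivAt_of_tendsto'
    (f := fun s => 1 - stdCDF s) (f' := fun s => -stdGauss s) (a := t)
    (fun s _ => by simpa using ((hasDerivAt_stdCDF s).const_sub 1))
    (integrable_stdGauss.neg.integrableOn)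
    (by simpa using (stdCDF_tendsto_atBot.const_sub 1))
  rw [h1] at h2
  linarith
lemma hasDerivAt_mul'' {f g : ℝ → ℝ} {f' g' v w : ℝ} (hf : HasDerivAt f f' 0)
    (hg : HasDerivAt g g' 0) (hfv : f 0 = v) (hgv : g 0 = w) :
    HasDerivAt (fun t => f t * g t) (f' * w + v * g') 0 := by
  subst hfv; subst hgv; exact hf.mul hg
lemma hasDerivAt_div'' {f g : ℝ → ℝ} {f' g' v w : ℝ} (hf : HasDerivAt f f' 0)
    (hg : HasDerivAt g g' 0) (hfv : f 0 = v) (hgv : g 0 = w) (hw : w ≠ 0) :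
    HasDerivAt (fun t => f t / g t) ((f' * w - v * g') / w ^ 2) 0 := by
  subst hfv; subst hgv; exact hf.div hg hw
lemma integral_Iic_mix (μ1 μ2 Δ : ℝ) :
    ∫ t in Set.Iic ((μ1 + μ2) / 2 + Δ), mixDensity μ1 μ2 Δ t
      = pHead ((μ2 - μ1) / 2) Δ * stdCDF ((μ2 - μ1) / 2 + Δ)
        + pTail ((μ2 - μ1) / 2) Δ * stdCDF (Δ - (μ2 - μ1) / 2) := by
  simp only [mixDensity]
  rw [MeasureTheory.integral_add
      (((integrable_stdGauss_shift μ1).const_mul _).integrableOn)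
      (((integrable_stdGauss_shift μ2).const_mul _).integrableOn),
    integral_const_mul, integral_const_mul,
    integral_Iic_stdGauss_shift, integral_Iic_stdGauss_shift,
    show (μ1 + μ2) / 2 + Δ - μ1 = (μ2 - μ1) / 2 + Δ by ring,
    show (μ1 + μ2) / 2 + Δ - μ2 = Δ - (μ2 - μ1) / 2 by ring]
lemma integral_Iic_mix_mom (μ1 μ2 Δ : ℝ) :
    ∫ t in Set.Iic ((μ1 + μ2) / 2 + Δ), t * mixDensity μ1 μ2 Δ t
      = pHead ((μ2 - μ1) / 2) Δ
          * (μ1 * stdCDF ((μ2 - μ1) / 2 + Δ) - stdGauss ((μ2 - μ1) / 2 + Δ))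
        + pTail ((μ2 - μ1) / 2) Δ
          * (μ2 * stdCDF (Δ - (μ2 - μ1) / 2) - stdGauss (Δ - (μ2 - μ1) / 2)) := by
  have hfun : (fun t => t * mixDensity μ1 μ2 Δ t)
      = fun t => pHead ((μ2 - μ1) / 2) Δ * (t * stdGauss (t - μ1))
        + pTail ((μ2 - μ1) / 2) Δ * (t * stdGauss (t - μ2)) := by
    funext t; simp only [mixDensity]; ring
  rw [hfun, MeasureTheory.integral_add
      (((integrable_mul_stdGauss_shift μ1).const_mul _).integrableOn)
      (((integrable_mul_stdGauss_shift μ2).const_mul _).integrableOn),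
    integral_const_mul, integral_const_mul,
    integral_Iic_mul_stdGauss_shift, integral_Iic_mul_stdGauss_shift,
    show (μ1 + μ2) / 2 + Δ - μ1 = (μ2 - μ1) / 2 + Δ by ring,
    show (μ1 + μ2) / 2 + Δ - μ2 = Δ - (μ2 - μ1) / 2 by ring]
lemma integral_Ioi_mix (μ1 μ2 Δ : ℝ) :
    ∫ t in Set.Ioi ((μ1 + μ2) / 2 + Δ), mixDensity μ1 μ2 Δ t
      = pHead ((μ2 - μ1) / 2) Δ * (1 - stdCDF ((μ2 - μ1) / 2 + Δ))
        + pTail ((μ2 - μ1) / 2) Δ * (1 - stdCDF (Δ - (μ2 - μ1) / 2)) := by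
  simp only [mixDensity]
  rw [MeasureTheory.integral_add
      (((integrable_stdGauss_shift μ1).const_mul _).integrableOn)
      (((integrable_stdGauss_shift μ2).const_mul _).integrableOn),
    integral_const_mul, integral_const_mul,
    integral_Ioi_stdGauss_shift, integral_Ioi_stdGauss_shift,
    show (μ1 + μ2) / 2 + Δ - μ1 = (μ2 - μ1) / 2 + Δ by ring,
    show (μ1 + μ2) / 2 + Δ - μ2 = Δ - (μ2 - μ1) / 2 by ring]
lemma integral_Ioi_mix_mom (μ1 μ2 Δ : ℝ) :
    ∫ t in Set.Ioi ((μ1 + μ2) / 2 + Δ), t * mixDensity μ1 μ2 Δ t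
      = pHead ((μ2 - μ1) / 2) Δ
          * (μ1 * (1 - stdCDF ((μ2 - μ1) / 2 + Δ)) + stdGauss ((μ2 - μ1) / 2 + Δ))
        + pTail ((μ2 - μ1) / 2) Δ
          * (μ2 * (1 - stdCDF (Δ - (μ2 - μ1) / 2)) + stdGauss (Δ - (μ2 - μ1) / 2)) := by
  have hfun : (fun t => t * mixDensity μ1 μ2 Δ t)
      = fun t => pHead ((μ2 - μ1) / 2) Δ * (t * stdGauss (t - μ1))
        + pTail ((μ2 - μ1) / 2) Δ * (t * stdGauss (t - μ2)) := by
    funext t; simp only [mixDensity]; ring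
  rw [hfun, MeasureTheory.integral_add
      (((integrable_mul_stdGauss_shift μ1).const_mul _).integrableOn)
      (((integrable_mul_stdGauss_shift μ2).const_mul _).integrableOn),
    integral_const_mul, integral_const_mul,
    integral_Ioi_mul_stdGauss_shift, integral_Ioi_mul_stdGauss_shift,
    show (μ1 + μ2) / 2 + Δ - μ1 = (μ2 - μ1) / 2 + Δ by ring,
    show (μ1 + μ2) / 2 + Δ - μ2 = Δ - (μ2 - μ1) / 2 by ring]
lemma pHead_zero (x : ℝ) : pHead x 0 = 1 / 2 := by
  simp [pHead, Real.exp_zero]; norm_num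
lemma pTail_zero (x : ℝ) : pTail x 0 = 1 / 2 := by
  simp [pTail, Real.exp_zero]; norm_num
lemma hasDerivAt_exp2x (x : ℝ) : HasDerivAt (fun Δ => Real.exp (2 * x * Δ)) (2 * x) 0 := by
  have := ((hasDerivAt_id (0 : ℝ)).const_mul (2 * x)).exp
  simpa using this
lemma hasDerivAt_pHead (x : ℝ) : HasDerivAt (fun Δ => pHead x Δ) (x / 2) 0 := by
  have h := hasDerivAt_div'' (v := 1) (w := 2) (hasDerivAt_exp2x x)
    ((hasDerivAt_exp2x x).const_add 1) (by simp) (by norm_num) (by norm_num)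
  have h2 : ((2 * x) * 2 - 1 * (2 * x)) / 2 ^ 2 = x / 2 := by ring
  rw [h2] at h
  exact h
lemma hasDerivAt_pTail (x : ℝ) : HasDerivAt (fun Δ => pTail x Δ) (-x / 2) 0 := by
  have h := hasDerivAt_div'' (v := 1) (w := 2) (hasDerivAt_const (0:ℝ) 1)
    ((hasDerivAt_exp2x x).const_add 1) (by simp) (by norm_num) (by norm_num)
  have h2 : ((0 : ℝ) * 2 - 1 * (2 * x)) / 2 ^ 2 = -x / 2 := by ring
  rw [h2] at h
  exact h
lemma hasDerivAt_cdf_left (x : ℝ) :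
    HasDerivAt (fun Δ => stdCDF (x + Δ)) (stdGauss x) 0 := by
  have := (hasDerivAt_stdCDF (x + 0)).comp 0 ((hasDerivAt_id (0:ℝ)).const_add x)
  simpa [Function.comp_def] using this
lemma hasDerivAt_cdf_right (x : ℝ) :
    HasDerivAt (fun Δ => stdCDF (Δ - x)) (stdGauss x) 0 := by
  have := (hasDerivAt_stdCDF (0 - x)).comp 0 ((hasDerivAt_id (0:ℝ)).sub_const x)
  simpa [stdGauss_neg, Function.comp_def] using this
lemma hasDerivAt_gauss_left (x : ℝ) :
    HasDerivAt (fun Δ => stdGauss (x + Δ)) (-x * stdGauss x) 0 := by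
  have := (hasDerivAt_stdGauss (x + 0)).comp 0 ((hasDerivAt_id (0:ℝ)).const_add x)
  simpa [Function.comp_def] using this
lemma hasDerivAt_gauss_right (x : ℝ) :
    HasDerivAt (fun Δ => stdGauss (Δ - x)) (x * stdGauss x) 0 := by
  have := (hasDerivAt_stdGauss (0 - x)).comp 0 ((hasDerivAt_id (0:ℝ)).sub_const x)
  simpa [stdGauss_neg, Function.comp_def] using this

/-- The progressively-balanced-sampling update `Δ ↦ θ̂(Δ)` is differentiable at
`Δ = 0` with derivative `C(x)`, `x = (μ2−μ1)/2`; that is,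
`θ̂(Δ) = θ* + C(x)·Δ + o(Δ)` as `Δ → 0`. -/
theorem pbsUpdate_hasDerivAt_zero (μ1 μ2 : ℝ) (hμ : μ1 < μ2) :
    HasDerivAt (fun Δ => pbsUpdate μ1 μ2 Δ) (contractionC ((μ2 - μ1) / 2)) 0 ∧
    (fun Δ => pbsUpdate μ1 μ2 Δ - (μ1 + μ2) / 2 - contractionC ((μ2 - μ1) / 2) * Δ)
      =o[nhds (0 : ℝ)] (fun Δ => Δ) := by
  set x := (μ2 - μ1) / 2 with hx
  -- closed forms for the two conditional means
  have hML : ∀ Δ : ℝ, mLeft μ1 μ2 Δ =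
      (pHead x Δ * (μ1 * stdCDF (x + Δ) - stdGauss (x + Δ))
        + pTail x Δ * (μ2 * stdCDF (Δ - x) - stdGauss (Δ - x))) /
      (pHead x Δ * stdCDF (x + Δ) + pTail x Δ * stdCDF (Δ - x)) := by
    intro Δ
    rw [hx, mLeft, integral_Iic_mix, integral_Iic_mix_mom]
  have hMR : ∀ Δ : ℝ, mRight μ1 μ2 Δ =
      (pHead x Δ * (μ1 * (1 - stdCDF (x + Δ)) + stdGauss (x + Δ))
        + pTail x Δ * (μ2 * (1 - stdCDF (Δ - x)) + stdGauss (Δ - x))) /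
      (pHead x Δ * (1 - stdCDF (x + Δ)) + pTail x Δ * (1 - stdCDF (Δ - x))) := by
    intro Δ
    rw [hx, mRight, integral_Ioi_mix, integral_Ioi_mix_mom]
  have hpbs : (fun Δ => pbsUpdate μ1 μ2 Δ) = fun Δ =>
      ((pHead x Δ * (μ1 * stdCDF (x + Δ) - stdGauss (x + Δ))
        + pTail x Δ * (μ2 * stdCDF (Δ - x) - stdGauss (Δ - x))) /
      (pHead x Δ * stdCDF (x + Δ) + pTail x Δ * stdCDF (Δ - x)) +
      (pHead x Δ * (μ1 * (1 - stdCDF (x + Δ)) + stdGauss (x + Δ))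
        + pTail x Δ * (μ2 * (1 - stdCDF (Δ - x)) + stdGauss (Δ - x))) /
      (pHead x Δ * (1 - stdCDF (x + Δ)) + pTail x Δ * (1 - stdCDF (Δ - x)))) / 2 := by
    funext Δ
    rw [pbsUpdate, hML Δ, hMR Δ]
  -- derivatives of the building blocks
  have hin1 : HasDerivAt (fun Δ => μ1 * stdCDF (x + Δ) - stdGauss (x + Δ))
      (μ1 * stdGauss x - -x * stdGauss x) 0 :=
    ((hasDerivAt_cdf_left x).const_mul μ1).sub (hasDerivAt_gauss_left x)
  have hin2 : HasDerivAt (fun Δ => μ2 * stdCDF (Δ - x) - stdGauss (Δ - x))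
      (μ2 * stdGauss x - x * stdGauss x) 0 :=
    ((hasDerivAt_cdf_right x).const_mul μ2).sub (hasDerivAt_gauss_right x)
  have hin3 : HasDerivAt (fun Δ => μ1 * (1 - stdCDF (x + Δ)) + stdGauss (x + Δ))
      (μ1 * -stdGauss x + -x * stdGauss x) 0 :=
    (((hasDerivAt_cdf_left x).const_sub 1).const_mul μ1).add (hasDerivAt_gauss_left x)
  have hin4 : HasDerivAt (fun Δ => μ2 * (1 - stdCDF (Δ - x)) + stdGauss (Δ - x))
      (μ2 * -stdGauss x + x * stdGauss x) 0 :=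
    (((hasDerivAt_cdf_right x).const_sub 1).const_mul μ2).add (hasDerivAt_gauss_right x)
  have hN1 : HasDerivAt (fun Δ => pHead x Δ * (μ1 * stdCDF (x + Δ) - stdGauss (x + Δ))
      + pTail x Δ * (μ2 * stdCDF (Δ - x) - stdGauss (Δ - x)))
      ((x / 2 * (μ1 * stdCDF x - stdGauss x)
        + 1 / 2 * (μ1 * stdGauss x - -x * stdGauss x))
      + (-x / 2 * (μ2 * (1 - stdCDF x) - stdGauss x)
        + 1 / 2 * (μ2 * stdGauss x - x * stdGauss x))) 0 := by
    exact (hasDerivAt_mul'' (hasDerivAt_pHead x) hin1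
        (by simp only [pHead_zero])
        (by simp only [add_zero])).add
      (hasDerivAt_mul'' (hasDerivAt_pTail x) hin2
        (by simp only [pTail_zero])
        (by simp only [zero_sub, stdCDF_neg, stdGauss_neg]))
  have hD1 : HasDerivAt (fun Δ => pHead x Δ * stdCDF (x + Δ) + pTail x Δ * stdCDF (Δ - x))
      ((x / 2 * stdCDF x + 1 / 2 * stdGauss x)
        + (-x / 2 * (1 - stdCDF x) + 1 / 2 * stdGauss x)) 0 := by
    exact (hasDerivAt_mul'' (hasDerivAt_pHead x) (hasDerivAt_cdf_left x)
        (by simp only [pHead_zero]) (by simp only [add_zero])).add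
      (hasDerivAt_mul'' (hasDerivAt_pTail x) (hasDerivAt_cdf_right x)
        (by simp only [pTail_zero]) (by simp only [zero_sub, stdCDF_neg]))
  have hN2 : HasDerivAt (fun Δ => pHead x Δ * (μ1 * (1 - stdCDF (x + Δ)) + stdGauss (x + Δ))
      + pTail x Δ * (μ2 * (1 - stdCDF (Δ - x)) + stdGauss (Δ - x)))
      ((x / 2 * (μ1 * (1 - stdCDF x) + stdGauss x)
        + 1 / 2 * (μ1 * -stdGauss x + -x * stdGauss x))
      + (-x / 2 * (μ2 * stdCDF x + stdGauss x)
        + 1 / 2 * (μ2 * -stdGauss x + x * stdGauss x))) 0 := by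
    exact (hasDerivAt_mul'' (hasDerivAt_pHead x) hin3
        (by simp only [pHead_zero]) (by simp only [add_zero])).add
      (hasDerivAt_mul'' (hasDerivAt_pTail x) hin4
        (by simp only [pTail_zero])
        (by simp only [zero_sub, stdCDF_neg, stdGauss_neg]; ring))
  have hD2 : HasDerivAt (fun Δ => pHead x Δ * (1 - stdCDF (x + Δ))
      + pTail x Δ * (1 - stdCDF (Δ - x)))
      ((x / 2 * (1 - stdCDF x) + 1 / 2 * -stdGauss x)
        + (-x / 2 * stdCDF x + 1 / 2 * -stdGauss x)) 0 := by
    exact (hasDerivAt_mul'' (hasDerivAt_pHead x) ((hasDerivAt_cdf_left x).const_sub 1)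
        (by simp only [pHead_zero]) (by simp only [add_zero])).add
      (hasDerivAt_mul'' (hasDerivAt_pTail x) ((hasDerivAt_cdf_right x).const_sub 1)
        (by simp only [pTail_zero]) (by simp only [zero_sub, stdCDF_neg]; ring))
  have hm1 := hasDerivAt_div''
      (v := 1 / 2 * (μ1 * stdCDF x - stdGauss x) + 1 / 2 * (μ2 * (1 - stdCDF x) - stdGauss x))
      (w := 1 / 2) hN1 hD1
      (by simp only [pHead_zero, pTail_zero, add_zero, zero_sub, stdCDF_neg, stdGauss_neg])
      (by simp only [pHead_zero, pTail_zero, add_zero, zero_sub, stdCDF_neg]; ring)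
      (by norm_num)
  have hm2 := hasDerivAt_div''
      (v := 1 / 2 * (μ1 * (1 - stdCDF x) + stdGauss x) + 1 / 2 * (μ2 * stdCDF x + stdGauss x))
      (w := 1 / 2) hN2 hD2
      (by simp only [pHead_zero, pTail_zero, add_zero, zero_sub, stdCDF_neg, stdGauss_neg]; ring)
      (by simp only [pHead_zero, pTail_zero, add_zero, zero_sub, stdCDF_neg]; ring)
      (by norm_num)
  have hG := (hm1.add hm2).div_const 2
  simp only [Pi.add_apply] at hG
  rw [← hpbs] at hG
  have hmu2 : μ2 = μ1 + 2 * x := by rw [hx]; ring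
  have hCeq : contractionC x =
      ((((x / 2 * (μ1 * stdCDF x - stdGauss x)
        + 1 / 2 * (μ1 * stdGauss x - -x * stdGauss x))
      + (-x / 2 * (μ2 * (1 - stdCDF x) - stdGauss x)
        + 1 / 2 * (μ2 * stdGauss x - x * stdGauss x))) * (1 / 2)
      - (1 / 2 * (μ1 * stdCDF x - stdGauss x) + 1 / 2 * (μ2 * (1 - stdCDF x) - stdGauss x))
        * ((x / 2 * stdCDF x + 1 / 2 * stdGauss x)
        + (-x / 2 * (1 - stdCDF x) + 1 / 2 * stdGauss x))) / (1 / 2) ^ 2 +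
      (((x / 2 * (μ1 * (1 - stdCDF x) + stdGauss x)
        + 1 / 2 * (μ1 * -stdGauss x + -x * stdGauss x))
      + (-x / 2 * (μ2 * stdCDF x + stdGauss x)
        + 1 / 2 * (μ2 * -stdGauss x + x * stdGauss x))) * (1 / 2)
      - (1 / 2 * (μ1 * (1 - stdCDF x) + stdGauss x) + 1 / 2 * (μ2 * stdCDF x + stdGauss x))
        * ((x / 2 * (1 - stdCDF x) + 1 / 2 * -stdGauss x)
        + (-x / 2 * stdCDF x + 1 / 2 * -stdGauss x))) / (1 / 2) ^ 2) / 2 := by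
    rw [contractionC, hmu2]; ring
  have hDeriv : HasDerivAt (fun Δ => pbsUpdate μ1 μ2 Δ) (contractionC x) 0 := by
    rw [hCeq]; exact hG
  refine ⟨hDeriv, ?_⟩
  have hpbs0 : pbsUpdate μ1 μ2 0 = (μ1 + μ2) / 2 := by
    rw [pbsUpdate, hML 0, hMR 0, pHead_zero, pTail_zero]
    simp only [add_zero, zero_sub, stdCDF_neg, stdGauss_neg]
    rw [show (1:ℝ) / 2 * stdCDF x + 1 / 2 * (1 - stdCDF x) = 1 / 2 by ring,
      show (1:ℝ) / 2 * (1 - stdCDF x) + 1 / 2 * (1 - (1 - stdCDF x)) = 1 / 2 by ring]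
    ring
  have h2 := hasDerivAt_iff_isLittleO.mp hDeriv
  simp only [sub_zero, smul_eq_mul, hpbs0] at h2
  simpa [mul_comm] using h2
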